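/- If c: ℝᵈ → ℝ is twice continuously differentiable and α-strongly convex with α > 0, β ∈ ℝᵈ with ‖β‖ = 1, s ∈ ℝ, and σ² > 1/(α√(2πe)), then the function x ↦ -c(x - z) + 1 - Φ_σ(s - βᵀx) is strictly concave on ℝᵈ, where Φ_σ is the CDF of N(0,σ²). -/

import Mathlib

open Real Set RealInnerProductSpace

/-- The CDF of the normal distribution with mean 0 and variance σ². -/
noncomputable def normalCDF (σ : ℝ) (s : ℝ) : ℝ :=
  ∫ y in Set.Iic s, (1 / (σ * Real.sqrt (2 * Real.pi))) * Real.exp (-y ^ 2 / (2 * σ ^ 2))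

/-- The normal density. -/
noncomputable def gpdf (σ y : ℝ) : ℝ :=
  (1 / (σ * Real.sqrt (2 * Real.pi))) * Real.exp (-y ^ 2 / (2 * σ ^ 2))

lemma gpdf_integrable {σ : ℝ} (hσ : 0 < σ) : MeasureTheory.Integrable (gpdf σ) := by
  have hσ2 : (0:ℝ) < 2 * σ ^ 2 := by positivity
  have h := (integrable_exp_neg_mul_sq (b := 1 / (2 * σ ^ 2)) (by positivity)).const_mul
    (1 / (σ * Real.sqrt (2 * Real.pi)))
  have he : gpdf σ = fun y : ℝ =>
      1 / (σ * Real.sqrt (2 * Real.pi)) * Real.exp (-(1 / (2 * σ ^ 2)) * y ^ 2) := by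
    funext y
    unfold gpdf
    congr 2
    field_simp
  rw [he]
  exact h

lemma gpdf_continuous {σ : ℝ} : Continuous (gpdf σ) := by
  unfold gpdf
  exact continuous_const.mul (Real.continuous_exp.comp
    ((continuous_pow 2).neg.div_const _))

lemma hasDerivAt_normalCDF {σ : ℝ} (hσ : 0 < σ) (u : ℝ) :
    HasDerivAt (normalCDF σ) (gpdf σ u) u := by
  have hint := gpdf_integrable hσ
  have key : normalCDF σ = fun v => normalCDF σ 0 + ∫ y in (0:ℝ)..v, gpdf σ y := by
    funext v
    have h := intervalIntegral.integral_Iic_sub_Iic (f := gpdf σ) (μ := MeasureTheory.volume)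
      hint.integrableOn hint.integrableOn (a := 0) (b := v)
    unfold normalCDF gpdf at *
    linarith
  rw [key]
  exact ((intervalIntegral.integral_hasDerivAt_right hint.intervalIntegrable
    (gpdf_continuous.stronglyMeasurableAtFilter _ _)
    gpdf_continuous.continuousAt).const_add _)

lemma hasDerivAt_gpdf {σ : ℝ} (hσ : 0 < σ) (y : ℝ) :
    HasDerivAt (gpdf σ) (-(y / σ ^ 2) * gpdf σ y) y := by
  have h1 : HasDerivAt (fun x : ℝ => -x ^ 2 / (2 * σ ^ 2)) (-(2 * y ^ 1) / (2 * σ ^ 2)) y :=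
    ((hasDerivAt_pow 2 y).neg).div_const _
  have h2 := (h1.exp.const_mul (1 / (σ * Real.sqrt (2 * Real.pi))))
  refine h2.congr_deriv ?_
  unfold gpdf
  field_simp

lemma key_bound {σ : ℝ} (hσ : 0 < σ) (y : ℝ) :
    (y / σ ^ 2) * gpdf σ y ≤ (σ ^ 2 * Real.sqrt (2 * Real.pi * Real.exp 1))⁻¹ := by
  have hsp : (0:ℝ) < Real.sqrt (2 * Real.pi) := Real.sqrt_pos.mpr (by positivity)
  have hy : y * Real.exp (-y ^ 2 / (2 * σ ^ 2)) ≤ σ * Real.exp (-(1/2) : ℝ) := by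
    rcases le_or_gt y 0 with h | h
    · exact le_trans (mul_nonpos_of_nonpos_of_nonneg h (Real.exp_pos _).le) (by positivity)
    · have h2 : ((y / σ) ^ 2 - 1) / 2 + 1 ≤ Real.exp (((y / σ) ^ 2 - 1) / 2) :=
        Real.add_one_le_exp _
      have h4 : y ≤ σ * (((y / σ) ^ 2 - 1) / 2 + 1) := by
        have hsq : 0 ≤ (y / σ - 1) ^ 2 := sq_nonneg _
        have hσ' : σ ≠ 0 := ne_of_gt hσ
        have heq : σ * (((y / σ) ^ 2 - 1) / 2 + 1) - y = σ / 2 * (y / σ - 1) ^ 2 := by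
          field_simp
          ring
        nlinarith [mul_nonneg (div_nonneg hσ.le (by norm_num : (0:ℝ) ≤ 2)) hsq]
      have hσ' : σ ≠ 0 := ne_of_gt hσ
      have h5 : ((y / σ) ^ 2 - 1) / 2 = y ^ 2 / (2 * σ ^ 2) - 1 / 2 := by
        field_simp
      have h1 : y ≤ σ * Real.exp (y ^ 2 / (2 * σ ^ 2) - 1 / 2) := by
        rw [← h5]
        exact h4.trans (mul_le_mul_of_nonneg_left h2 hσ.le)
      calc y * Real.exp (-y ^ 2 / (2 * σ ^ 2))
          ≤ σ * Real.exp (y ^ 2 / (2 * σ ^ 2) - 1 / 2) * Real.exp (-y ^ 2 / (2 * σ ^ 2)) :=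
            mul_le_mul_of_nonneg_right h1 (Real.exp_pos _).le
        _ = σ * Real.exp (-(1/2)) := by
            rw [mul_assoc, ← Real.exp_add]
            ring_nf
  have hsqrtE : Real.sqrt (2 * Real.pi * Real.exp 1)
      = Real.sqrt (2 * Real.pi) * Real.exp (1/2) := by
    rw [show Real.exp 1 = (Real.exp (1/2)) ^ 2 by rw [← Real.exp_nat_mul]; norm_num,
      Real.sqrt_mul (by positivity), Real.sqrt_sq (Real.exp_pos _).le]
  have hσ2 : (0:ℝ) < σ ^ 2 := by positivity
  rw [hsqrtE, inv_eq_one_div, le_div_iff₀ (by positivity)]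
  unfold gpdf
  have h6 : Real.exp (-(1/2) : ℝ) * Real.exp (1/2) = 1 := by
    rw [← Real.exp_add]; norm_num
  have hσ' : σ ≠ 0 := ne_of_gt hσ
  have hE : 0 < Real.exp (1/2 : ℝ) := Real.exp_pos _
  have key : y * Real.exp (-y ^ 2 / (2 * σ ^ 2)) * Real.exp (1/2) ≤ σ := by
    calc y * Real.exp (-y ^ 2 / (2 * σ ^ 2)) * Real.exp (1/2)
        ≤ σ * Real.exp (-(1/2)) * Real.exp (1/2) := by
          exact mul_le_mul_of_nonneg_right hy hE.le
      _ = σ := by rw [mul_assoc, h6, mul_one]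
  rw [show y / σ ^ 2 * (1 / (σ * Real.sqrt (2 * Real.pi)) * Real.exp (-y ^ 2 / (2 * σ ^ 2)))
      * (σ ^ 2 * (Real.sqrt (2 * Real.pi) * Real.exp (1/2)))
      = (y * Real.exp (-y ^ 2 / (2 * σ ^ 2)) * Real.exp (1/2)) / σ by
    field_simp]
  rw [div_le_one hσ]
  exact key

lemma g_concave {σ : ℝ} (hσ : 0 < σ) (s : ℝ) :
    ConcaveOn ℝ Set.univ (fun t : ℝ =>
      1 - normalCDF σ (s - t)
        - (σ ^ 2 * Real.sqrt (2 * Real.pi * Real.exp 1))⁻¹ / 2 * t ^ 2) := by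
  set L : ℝ := (σ ^ 2 * Real.sqrt (2 * Real.pi * Real.exp 1))⁻¹ with hL
  have hder : ∀ t : ℝ, HasDerivAt
      (fun t : ℝ => 1 - normalCDF σ (s - t) - L / 2 * t ^ 2)
      (gpdf σ (s - t) - L * t) t := by
    intro t
    have hin : HasDerivAt (fun t : ℝ => s - t) (-1) t := (hasDerivAt_id t).const_sub s
    have hΦ : HasDerivAt (fun t : ℝ => normalCDF σ (s - t)) (gpdf σ (s - t) * (-1)) t :=
      (hasDerivAt_normalCDF hσ (s - t)).comp t hin
    have hq : HasDerivAt (fun t : ℝ => L / 2 * t ^ 2) (L / 2 * (2 * t ^ 1)) t :=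
      (hasDerivAt_pow 2 t).const_mul (L / 2)
    have := (hΦ.const_sub 1).sub hq
    exact this.congr_deriv (by ring)
  have hder2 : ∀ t : ℝ, HasDerivAt
      (fun t : ℝ => gpdf σ (s - t) - L * t)
      (((s - t) / σ ^ 2) * gpdf σ (s - t) - L) t := by
    intro t
    have hin : HasDerivAt (fun t : ℝ => s - t) (-1) t := (hasDerivAt_id t).const_sub s
    have h1 : HasDerivAt (fun t : ℝ => gpdf σ (s - t))
        ((-((s - t) / σ ^ 2) * gpdf σ (s - t)) * (-1)) t :=
      (hasDerivAt_gpdf hσ (s - t)).comp t hin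
    have h2 : HasDerivAt (fun t : ℝ => L * t) (L * 1) t := (hasDerivAt_id t).const_mul L
    have := h1.sub h2
    exact this.congr_deriv (by ring)
  refine concaveOn_of_hasDerivWithinAt2_nonpos convex_univ
    (f' := fun t => gpdf σ (s - t) - L * t)
    (f'' := fun t => ((s - t) / σ ^ 2) * gpdf σ (s - t) - L)
    (fun t _ => (hder t).continuousAt.continuousWithinAt)
    (fun t _ => (hder t).hasDerivWithinAt)
    (fun t _ => (hder2 t).hasDerivWithinAt)
    (fun t _ => ?_)
  have := key_bound hσ (s - t)
  rw [← hL] at this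
  linarith

theorem utility_strictly_concave {d : ℕ}
    (c : EuclideanSpace ℝ (Fin d) → ℝ) (α σ s : ℝ)
    (z β : EuclideanSpace ℝ (Fin d))
    (hα : 0 < α) (hσ : 0 < σ)
    (hc2 : ContDiff ℝ 2 c)
    (hconv : StrongConvexOn Set.univ α c)
    (hβ : ‖β‖ = 1)
    (hnoise : σ ^ 2 > 1 / (α * Real.sqrt (2 * Real.pi * Real.exp 1))) :
    StrictConcaveOn ℝ Set.univ
      (fun x : EuclideanSpace ℝ (Fin d) =>
        -c (x - z) + 1 - normalCDF σ (s - ⟪β, x⟫)) := by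
  have hg := g_concave hσ s
  set L : ℝ := (σ ^ 2 * Real.sqrt (2 * Real.pi * Real.exp 1))⁻¹ with hL
  have hsp : (0:ℝ) < Real.sqrt (2 * Real.pi * Real.exp 1) := Real.sqrt_pos.mpr (by positivity)
  have hσ2 : (0:ℝ) < σ ^ 2 := by positivity
  have hLpos : 0 < L := by rw [hL]; exact inv_pos.mpr (mul_pos hσ2 hsp)
  have hLα : L < α := by
    rw [gt_iff_lt, div_lt_iff₀ (mul_pos hα hsp)] at hnoise
    have h1 : L * (σ ^ 2 * Real.sqrt (2 * Real.pi * Real.exp 1)) = 1 :=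
      inv_mul_cancel₀ (by positivity)
    nlinarith [mul_pos (mul_pos hσ2 hsp) hα]
  refine ⟨convex_univ, fun x _ y _ hxy a b ha hb hab => ?_⟩
  have hb1 : b = 1 - a := by linarith
  subst hb1
  have ha2 : 0 < 1 - a := hb
  set u : ℝ := ⟪β, x⟫ with hu
  set v : ℝ := ⟪β, y⟫ with hv
  have hinner : ⟪β, a • x + (1 - a) • y⟫ = a * u + (1 - a) * v := by
    rw [inner_add_right, real_inner_smul_right, real_inner_smul_right]
  have hcomb : a • x + (1 - a) • y - z = a • (x - z) + (1 - a) • (y - z) := by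
    module
  have hN : 0 < ‖x - y‖ ^ 2 :=
    pow_pos (norm_pos_iff.mpr (sub_ne_zero.mpr hxy)) 2
  have hcs : (u - v) ^ 2 ≤ ‖x - y‖ ^ 2 := by
    have h1 : u - v = ⟪β, x - y⟫ := by rw [inner_sub_right]
    have h2 := abs_real_inner_le_norm β (x - y)
    rw [hβ, one_mul] at h2
    calc (u - v) ^ 2 = |⟪β, x - y⟫| ^ 2 := by rw [h1, sq_abs]
      _ ≤ ‖x - y‖ ^ 2 := by gcongr
  have hconv' := hconv.2 (mem_univ (x - z)) (mem_univ (y - z)) ha.le ha2.le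
    (by ring : a + (1 - a) = 1)
  rw [show x - z - (y - z) = x - y by abel] at hconv'
  simp only [smul_eq_mul] at hconv'
  have hgc := hg.2 (mem_univ u) (mem_univ v) ha.le ha2.le (by ring : a + (1 - a) = 1)
  simp only [smul_eq_mul] at hgc
  simp only [smul_eq_mul]
  rw [hinner, hcomb]
  set N : ℝ := ‖x - y‖ ^ 2 with hNdef
  have hid : a * (1 - normalCDF σ (s - u)) + (1 - a) * (1 - normalCDF σ (s - v))
      - a * (1 - a) * (L / 2) * (u - v) ^ 2
      = (a * (1 - normalCDF σ (s - u) - L / 2 * u ^ 2)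
        + (1 - a) * (1 - normalCDF σ (s - v) - L / 2 * v ^ 2))
        + L / 2 * (a * u + (1 - a) * v) ^ 2 := by ring
  have hΦkey : a * (1 - normalCDF σ (s - u)) + (1 - a) * (1 - normalCDF σ (s - v))
      - a * (1 - a) * (L / 2) * (u - v) ^ 2
      ≤ 1 - normalCDF σ (s - (a * u + (1 - a) * v))
        - L / 2 * (a * u + (1 - a) * v) ^ 2 + L / 2 * (a * u + (1 - a) * v) ^ 2 := by
    rw [hid]
    linarith [hgc]
  have h8 : L / 2 * (u - v) ^ 2 ≤ L / 2 * N := by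
    exact mul_le_mul_of_nonneg_left hcs (by linarith)
  have h9 : L / 2 * N < α / 2 * N := by
    exact mul_lt_mul_of_pos_right (by linarith) hN
  have hD : a * (1 - a) * (L / 2 * (u - v) ^ 2) < a * (1 - a) * (α / 2 * N) :=
    mul_lt_mul_of_pos_left (lt_of_le_of_lt h8 h9) (mul_pos ha ha2)
  linarith [hΦkey, hconv', hD]
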